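/- The algebra A is 8-dimensional over k with linear basis {g^i, g^i x : 0 ≤ i ≤ 3}, and there exists a Hopf algebra structure on A extending its algebra structure such that Δ(g) = g⊗g, Δ(x) = x⊗1 + g⊗x, ε(g) = 1, and ε(x) = 0. -/

import Mathlib

open TensorProduct

noncomputable section

/-- Generators of the Radford algebra `A`. -/
inductive AGen : Type
  | g | x

/-- The defining relations of the Radford algebra `A`:
`g⁴ = 1`, `x² = 1 − g²`, `gx = −xg`. -/
inductive ARel (k : Type) [Field k] : FreeAlgebra k AGen → FreeAlgebra k AGen → Prop
  | g4 : ARel k ((FreeAlgebra.ι k AGen.g) ^ 4) 1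
  | x2 : ARel k ((FreeAlgebra.ι k AGen.x) ^ 2) (1 - (FreeAlgebra.ι k AGen.g) ^ 2)
  | gx : ARel k (FreeAlgebra.ι k AGen.g * FreeAlgebra.ι k AGen.x)
      (-(FreeAlgebra.ι k AGen.x * FreeAlgebra.ι k AGen.g))

/-- The Radford algebra `A` of dimension 8. -/
abbrev AAlg (k : Type) [Field k] : Type := RingQuot (ARel k)

/-- The image of the generator `g` in `A`. -/
def gA (k : Type) [Field k] : AAlg k := RingQuot.mkAlgHom k (ARel k) (FreeAlgebra.ι k AGen.g)

/-- The image of the generator `x` in `A`. -/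
def xA (k : Type) [Field k] : AAlg k := RingQuot.mkAlgHom k (ARel k) (FreeAlgebra.ι k AGen.x)

/-- `(Δ, ε, S)` is a Hopf algebra structure on the `k`-algebra `H` (extending its
algebra structure): `Δ` and `ε` are algebra maps, `Δ` is coassociative, `ε` is a
counit for `Δ`, and `S` satisfies the antipode axioms. -/
def IsHopfAlgebraStructure (k : Type) [Field k] (H : Type) [Ring H] [Algebra k H]
    (Δ : H →ₐ[k] H ⊗[k] H) (ε : H →ₐ[k] k) (S : H →ₗ[k] H) : Prop :=
  (∀ h : H, (TensorProduct.assoc k H H H) (Δ.toLinearMap.rTensor H (Δ h)) =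
      Δ.toLinearMap.lTensor H (Δ h)) ∧
  (∀ h : H, (TensorProduct.lid k H) (ε.toLinearMap.rTensor H (Δ h)) = h) ∧
  (∀ h : H, (TensorProduct.rid k H) (ε.toLinearMap.lTensor H (Δ h)) = h) ∧
  (∀ h : H, (LinearMap.mul' k H) (S.rTensor H (Δ h)) = algebraMap k H (ε h)) ∧
  (∀ h : H, (LinearMap.mul' k H) (S.lTensor H (Δ h)) = algebraMap k H (ε h))


set_option maxHeartbeats 1000000
set_option synthInstance.maxHeartbeats 400000
open Fin.NatCast

section AuxRadford

variable (k : Type) [Field k]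
lemma hg4 : gA k ^ 4 = 1 := by
  have := RingQuot.mkAlgHom_rel k (ARel.g4 (k := k))
  simpa [gA, map_pow] using this
lemma hx2 : xA k ^ 2 = 1 - gA k ^ 2 := by
  have := RingQuot.mkAlgHom_rel k (ARel.x2 (k := k))
  simpa [xA, gA, map_pow, map_sub] using this
lemma hgx : gA k * xA k = -(xA k * gA k) := by
  have := RingQuot.mkAlgHom_rel k (ARel.gx (k := k))
  simpa [xA, gA, map_mul, map_neg] using this
lemma hxg : xA k * gA k = -(gA k * xA k) := by
  rw [hgx, neg_neg]

lemma Amul_neg (a b : AAlg k) : a * -b = -(a * b) := mul_neg a b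
lemma Aneg_mul (a b : AAlg k) : -a * b = -(a * b) := neg_mul a b
lemma Amul_sub (a b c : AAlg k) : a * (b - c) = a * b - a * c := mul_sub a b c
lemma Asub_mul (a b c : AAlg k) : (a - b) * c = a * c - b * c := sub_mul a b c



abbrev VV := (Fin 4 × Fin 2) → k

def bV : Module.Basis (Fin 4 × Fin 2) k (VV k) := Pi.basisFun k _

def sgn (i : Fin 4) : k := if (i : ℕ) % 2 = 0 then 1 else -1

def Gop : VV k →ₗ[k] VV k where
  toFun v := fun p => v (p.1 - 1, p.2)
  map_add' u v := by funext p; simp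
  map_smul' c v := by funext p; simp

def Xop : VV k →ₗ[k] VV k where
  toFun v := fun p =>
    if p.2 = 0 then sgn k p.1 * (v (p.1, 1) - v (p.1 - 2, 1))
    else sgn k p.1 * v (p.1, 0)
  map_add' u v := by
    funext p
    by_cases h : p.2 = 0 <;> simp [h] <;> ring
  map_smul' c v := by
    funext p
    by_cases h : p.2 = 0 <;> simp [h] <;> ring

lemma sgn_mul_self (j : Fin 4) : sgn k j * sgn k j = 1 := by
  unfold sgn; split <;> ring

lemma sgn_sub_two (j : Fin 4) : sgn k (j - 2) = sgn k j := by
  have h : ((j - 2 : Fin 4) : ℕ) % 2 = (j : ℕ) % 2 := by revert j; decide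
  unfold sgn
  rw [h]

lemma sgn_sub_one (j : Fin 4) : sgn k (j - 1) = -sgn k j := by
  have h : (((j - 1 : Fin 4) : ℕ) % 2 = 0) ↔ ¬ ((j : ℕ) % 2 = 0) := by revert j; decide
  unfold sgn
  by_cases hj : (j : ℕ) % 2 = 0
  · rw [if_pos hj, if_neg (fun a => (h.mp a) hj)]
  · rw [if_neg hj, if_pos (h.mpr hj)]; norm_num

lemma Gop4 : Gop k ^ 4 = 1 := by
  apply LinearMap.ext
  intro v
  funext p
  have h4 : ∀ j : Fin 4, j - 1 - 1 - 1 - 1 = j := by decide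
  simp [Gop, pow_succ, Module.End.mul_apply, Module.End.one_apply, h4]

lemma Xop2 : Xop k ^ 2 = 1 - Gop k ^ 2 := by
  apply LinearMap.ext
  intro v
  funext ⟨j, n⟩
  have h11 : ∀ j : Fin 4, j - 1 - 1 = j - 2 := by decide
  fin_cases n
  · simp [pow_succ, Module.End.mul_apply, LinearMap.sub_apply, Module.End.one_apply,
      Xop, Gop, h11]
    linear_combination (v (j, 0) - v (j - 2, 0)) * sgn_mul_self k j +
      (-(sgn k j * v (j - 2, 0))) * sgn_sub_two k j
  · simp [pow_succ, Module.End.mul_apply, LinearMap.sub_apply, Module.End.one_apply,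
      Xop, Gop, h11]
    linear_combination (v (j, 1) - v (j - 2, 1)) * sgn_mul_self k j

lemma GXop : Gop k * Xop k = -(Xop k * Gop k) := by
  apply LinearMap.ext
  intro v
  funext ⟨j, n⟩
  have h21 : ∀ j : Fin 4, j - 1 - 2 = j - 2 - 1 := by decide
  fin_cases n
  · simp [Module.End.mul_apply, LinearMap.neg_apply, Xop, Gop, h21]
    linear_combination (v (j - 1, 1) - v (j - 2 - 1, 1)) * sgn_sub_one k j
  · simp [Module.End.mul_apply, LinearMap.neg_apply, Xop, Gop]
    linear_combination v (j - 1, 0) * sgn_sub_one k j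

def ρF : FreeAlgebra k AGen →ₐ[k] Module.End k (VV k) :=
  FreeAlgebra.lift k (fun t => match t with | AGen.g => Gop k | AGen.x => Xop k)

lemma ρF_rel : ∀ ⦃a b : FreeAlgebra k AGen⦄, ARel k a b → ρF k a = ρF k b := by
  rintro a b (h | h | h) <;>
    simp [ρF, map_pow, map_mul, map_sub, map_neg, Gop4, Xop2, GXop]

def ρ : AAlg k →ₐ[k] Module.End k (VV k) :=
  RingQuot.liftAlgHom k ⟨ρF k, ρF_rel k⟩

lemma ρg : ρ k (gA k) = Gop k := by
  simp [ρ, gA, RingQuot.liftAlgHom_mkAlgHom_apply, ρF]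

lemma ρx : ρ k (xA k) = Xop k := by
  simp [ρ, xA, RingQuot.liftAlgHom_mkAlgHom_apply, ρF]

def evalA : AAlg k →ₗ[k] VV k where
  toFun a := ρ k a (bV k (0, 0))
  map_add' a b := by simp
  map_smul' c a := by simp

lemma Gsingle (q : Fin 4 × Fin 2) :
    Gop k (Pi.single q 1) = Pi.single (q.1 + 1, q.2) 1 := by
  funext p
  have h : ∀ a b : Fin 4, (a - 1 = b) ↔ (a = b + 1) := by decide
  simp [Gop, Pi.single_apply, Prod.ext_iff, h]

lemma Gpow_single (m : ℕ) : ∀ q : Fin 4 × Fin 2,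
    (Gop k ^ m) (Pi.single q 1) = Pi.single (q.1 + (m : Fin 4), q.2) 1 := by
  induction m with
  | zero => intro q; simp
  | succ m ih =>
    intro q
    have hidx : q.1 + (m : Fin 4) + 1 = q.1 + ((m + 1 : ℕ) : Fin 4) := by
      push_cast; rw [add_assoc]
    rw [pow_succ', Module.End.mul_apply, ih, Gsingle, hidx]

lemma Xsingle00 : Xop k (Pi.single ((0 : Fin 4), (0 : Fin 2)) 1)
    = Pi.single ((0 : Fin 4), (1 : Fin 2)) 1 := by
  funext ⟨j, m⟩
  fin_cases m
  · simp [Xop, Pi.single_apply, Prod.ext_iff]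
  · by_cases hj : j = 0
    · subst hj; simp [Xop, Pi.single_apply, Prod.ext_iff, sgn]
    · simp [Xop, Pi.single_apply, Prod.ext_iff, hj]

lemma eval_basis (p : Fin 4 × Fin 2) :
    evalA k (gA k ^ (p.1 : ℕ) * xA k ^ (p.2 : ℕ)) = bV k p := by
  obtain ⟨i, n⟩ := p
  have hb : ∀ q : Fin 4 × Fin 2, bV k q = Pi.single q 1 := fun q => by
    simp [bV]
  simp only [evalA, LinearMap.coe_mk, AddHom.coe_mk, map_mul, map_pow, ρg, ρx,
    Module.End.mul_apply, hb]
  fin_cases n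
  · simp only [Fin.isValue, Fin.val_zero, pow_zero, Module.End.one_apply, Gpow_single,
      Fin.cast_val_eq_self, zero_add]
    rfl
  · simp only [Fin.isValue, Fin.val_one, pow_one, Xsingle00, Gpow_single,
      Fin.cast_val_eq_self, zero_add]
    rfl

lemma gpow_mod (m : ℕ) : gA k ^ m = gA k ^ (m % 4) := by
  conv_lhs => rw [← Nat.div_add_mod m 4]
  rw [pow_add, pow_mul, hg4, one_pow, one_mul]

lemma x_gpow (j : ℕ) : xA k * gA k ^ j = (-1 : AAlg k) ^ j * (gA k ^ j * xA k) := by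
  induction j with
  | zero => simp
  | succ j ih =>
    rw [pow_succ (gA k) j, ← mul_assoc, ih, mul_assoc ((-1 : AAlg k) ^ j), mul_assoc (gA k ^ j) (xA k) (gA k), hxg]
    rw [Amul_neg, Amul_neg, pow_succ, mul_assoc, Aneg_mul, mul_assoc, one_mul, Amul_neg]

def Sspan : Submodule k (AAlg k) :=
  Submodule.span k (Set.range fun p : Fin 4 × Fin 2 => gA k ^ (p.1 : ℕ) * xA k ^ (p.2 : ℕ))

lemma gpow_mem (m : ℕ) : gA k ^ m ∈ Sspan k := by
  rw [gpow_mod]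
  apply Submodule.subset_span
  exact ⟨(⟨m % 4, Nat.mod_lt _ (by norm_num)⟩, 0), by simp⟩

lemma gpowx_mem (m : ℕ) : gA k ^ m * xA k ∈ Sspan k := by
  rw [gpow_mod]
  apply Submodule.subset_span
  exact ⟨(⟨m % 4, Nat.mod_lt _ (by norm_num)⟩, 1), by simp⟩

lemma one_mem_S : (1 : AAlg k) ∈ Sspan k := by
  simpa using gpow_mem k 0

lemma mul_g_mem {b : AAlg k} (hb : b ∈ Sspan k) : b * gA k ∈ Sspan k := by
  induction hb using Submodule.span_induction with
  | mem a ha =>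
    obtain ⟨⟨i, n⟩, rfl⟩ := ha
    fin_cases n
    · simpa [← pow_succ] using gpow_mem k ((i : ℕ) + 1)
    · simp only [Fin.isValue, Fin.val_one, pow_one]
      rw [mul_assoc, hxg, Amul_neg, ← mul_assoc, ← pow_succ]
      exact (Sspan k).neg_mem (gpowx_mem k _)
  | zero => simpa using (Sspan k).zero_mem
  | add a b _ _ iha ihb => rw [add_mul]; exact (Sspan k).add_mem iha ihb
  | smul c a _ iha => rw [smul_mul_assoc]; exact (Sspan k).smul_mem c iha

lemma mul_x_mem {b : AAlg k} (hb : b ∈ Sspan k) : b * xA k ∈ Sspan k := by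
  induction hb using Submodule.span_induction with
  | mem a ha =>
    obtain ⟨⟨i, n⟩, rfl⟩ := ha
    fin_cases n
    · simpa using gpowx_mem k (i : ℕ)
    · simp only [Fin.isValue, Fin.val_one, pow_one]
      rw [mul_assoc, ← pow_two, hx2, mul_sub, mul_one, ← pow_add]
      exact (Sspan k).sub_mem (gpow_mem k _) (gpow_mem k _)
  | zero => simpa using (Sspan k).zero_mem
  | add a b _ _ iha ihb => rw [add_mul]; exact (Sspan k).add_mem iha ihb
  | smul c a _ iha => rw [smul_mul_assoc]; exact (Sspan k).smul_mem c iha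

lemma span_top : Sspan k = ⊤ := by
  rw [Submodule.eq_top_iff']
  intro a
  obtain ⟨f, rfl⟩ := RingQuot.mkAlgHom_surjective k (ARel k) a
  have key : ∀ f : FreeAlgebra k AGen, ∀ b ∈ Sspan k,
      b * RingQuot.mkAlgHom k (ARel k) f ∈ Sspan k := by
    intro f
    induction f using FreeAlgebra.induction with
    | grade0 r =>
      intro b hb
      rw [AlgHom.commutes, ← Algebra.commutes, ← smul_eq_mul, algebraMap_smul]
      exact (Sspan k).smul_mem r hb
    | grade1 t =>
      cases t
      · intro b hb; exact mul_g_mem k hb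
      · intro b hb; exact mul_x_mem k hb
    | mul f1 f2 ih1 ih2 =>
      intro b hb
      rw [map_mul, ← mul_assoc]
      exact ih2 _ (ih1 b hb)
    | add f1 f2 ih1 ih2 =>
      intro b hb
      rw [map_add, mul_add]
      exact (Sspan k).add_mem (ih1 b hb) (ih2 b hb)
  simpa using key f 1 (one_mem_S k)



-- the basis of AAlg
def psiA : VV k →ₗ[k] AAlg k :=
  (bV k).constr k fun p => gA k ^ (p.1 : ℕ) * xA k ^ (p.2 : ℕ)

lemma psi_basis (p : Fin 4 × Fin 2) :
    psiA k (bV k p) = gA k ^ (p.1 : ℕ) * xA k ^ (p.2 : ℕ) :=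
  Module.Basis.constr_basis _ _ _ _

lemma eval_psi : evalA k ∘ₗ psiA k = LinearMap.id := by
  apply (bV k).ext
  intro p
  simp [psi_basis, eval_basis]

lemma psi_eval : psiA k ∘ₗ evalA k = LinearMap.id := by
  apply LinearMap.ext_on (span_top k)
  rintro a ⟨p, rfl⟩
  simp [eval_basis, psi_basis]

def equivA : VV k ≃ₗ[k] AAlg k :=
  LinearEquiv.ofLinear (psiA k) (evalA k) (psi_eval k) (eval_psi k)

def BB : Module.Basis (Fin 4 × Fin 2) k (AAlg k) := (bV k).map (equivA k)

lemma BB_apply (p : Fin 4 × Fin 2) : BB k p = gA k ^ (p.1 : ℕ) * xA k ^ (p.2 : ℕ) := by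
  simp [BB, equivA, Module.Basis.map_apply, psi_basis]

lemma finrank_A : Module.finrank k (AAlg k) = 8 := by
  rw [Module.finrank_eq_card_basis (BB k)]
  simp


-- helper sign lemmas
lemma Aneg_one_mul (a : AAlg k) : (-1 : AAlg k) * a = -a := neg_one_mul a

lemma Aneg_one_sq : ((-1 : AAlg k)) ^ 2 = 1 := by
  rw [pow_two, Aneg_one_mul, neg_neg]

lemma neg_one_pow_mod (a : ℕ) : (-1 : AAlg k) ^ a = (-1 : AAlg k) ^ (a % 2) := by
  conv_lhs => rw [← Nat.div_add_mod a 2]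
  rw [pow_add, pow_mul, Aneg_one_sq, one_pow, one_mul]

lemma Aeven_neg_one_pow {j : ℕ} (h : Even j) : (-1 : AAlg k) ^ j = 1 := by
  rw [neg_one_pow_mod, Nat.even_iff.mp h, pow_zero]

lemma Aodd_neg_one_pow {j : ℕ} (h : Odd j) : (-1 : AAlg k) ^ j = -1 := by
  rw [neg_one_pow_mod, Nat.odd_iff.mp h, pow_one]

lemma mul_neg_one_pow (j : ℕ) (a b : AAlg k) :
    a * ((-1 : AAlg k) ^ j * b) = (-1 : AAlg k) ^ j * (a * b) := by
  rcases Nat.even_or_odd j with h | h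
  · rw [Aeven_neg_one_pow k h, one_mul, one_mul]
  · rw [Aodd_neg_one_pow k h, Aneg_one_mul, Amul_neg, ← Aneg_one_mul]

-- counit
def epsF : FreeAlgebra k AGen →ₐ[k] k :=
  FreeAlgebra.lift k (fun t => match t with | AGen.g => (1 : k) | AGen.x => 0)

lemma epsF_rel : ∀ ⦃a b : FreeAlgebra k AGen⦄, ARel k a b → epsF k a = epsF k b := by
  rintro a b (h | h | h) <;> simp [epsF]

def epsA : AAlg k →ₐ[k] k := RingQuot.liftAlgHom k ⟨epsF k, epsF_rel k⟩

lemma epsg : epsA k (gA k) = 1 := by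
  simp [epsA, gA, RingQuot.liftAlgHom_mkAlgHom_apply, epsF]

lemma epsx : epsA k (xA k) = 0 := by
  simp [epsA, xA, RingQuot.liftAlgHom_mkAlgHom_apply, epsF]

lemma epsgpow (m : ℕ) : epsA k (gA k ^ m) = 1 := by simp [map_pow, epsg]

lemma epsgpowx (m : ℕ) : epsA k (gA k ^ m * xA k) = 0 := by simp [map_mul, epsx]

-- comultiplication
def DeltaF : FreeAlgebra k AGen →ₐ[k] AAlg k ⊗[k] AAlg k :=
  FreeAlgebra.lift k (fun t => match t with
    | AGen.g => gA k ⊗ₜ gA k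
    | AGen.x => xA k ⊗ₜ 1 + gA k ⊗ₜ xA k)

lemma DeltaF_rel : ∀ ⦃a b : FreeAlgebra k AGen⦄, ARel k a b → DeltaF k a = DeltaF k b := by
  rintro a b (h | h | h)
  · simp [DeltaF, map_pow, Algebra.TensorProduct.tmul_pow, hg4,
      Algebra.TensorProduct.one_def]
  · simp only [DeltaF, map_pow, map_one, map_sub, FreeAlgebra.lift_ι_apply]
    rw [pow_two, add_mul, mul_add, mul_add]
    simp only [Algebra.TensorProduct.tmul_mul_tmul, one_mul, mul_one]
    rw [hxg, TensorProduct.neg_tmul, ← pow_two, ← pow_two, hx2]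
    rw [TensorProduct.sub_tmul, TensorProduct.tmul_sub, Algebra.TensorProduct.tmul_pow,
      Algebra.TensorProduct.one_def]
    abel
  · simp only [DeltaF, map_mul, map_neg, FreeAlgebra.lift_ι_apply]
    rw [mul_add, add_mul]
    simp only [Algebra.TensorProduct.tmul_mul_tmul, one_mul, mul_one]
    rw [hgx, TensorProduct.neg_tmul, TensorProduct.tmul_neg]
    abel

def DeltaA : AAlg k →ₐ[k] AAlg k ⊗[k] AAlg k := RingQuot.liftAlgHom k ⟨DeltaF k, DeltaF_rel k⟩

lemma Deltag : DeltaA k (gA k) = gA k ⊗ₜ gA k := by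
  simp [DeltaA, gA, RingQuot.liftAlgHom_mkAlgHom_apply, DeltaF]

lemma Deltax : DeltaA k (xA k) = xA k ⊗ₜ 1 + gA k ⊗ₜ xA k := by
  simp [DeltaA, xA, RingQuot.liftAlgHom_mkAlgHom_apply, DeltaF]

lemma Deltagpow (m : ℕ) : DeltaA k (gA k ^ m) = (gA k ^ m) ⊗ₜ[k] (gA k ^ m) := by
  rw [map_pow, Deltag, Algebra.TensorProduct.tmul_pow]

lemma Deltagpowx (m : ℕ) : DeltaA k (gA k ^ m * xA k)
    = (gA k ^ m * xA k) ⊗ₜ[k] (gA k ^ m) + (gA k ^ (m + 1)) ⊗ₜ[k] (gA k ^ m * xA k) := by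
  rw [map_mul, Deltagpow, Deltax, mul_add]
  simp only [Algebra.TensorProduct.tmul_mul_tmul, mul_one, pow_succ]

-- antipode
def SAA : AAlg k →ₗ[k] AAlg k :=
  (BB k).constr k fun p => (-1 : AAlg k) ^ ((p.2 : ℕ) * ((p.1 : ℕ) + 1)) *
    (gA k ^ (3 * (p.1 : ℕ) + 3 * (p.2 : ℕ)) * xA k ^ (p.2 : ℕ))

lemma Bg (m : ℕ) : gA k ^ m = BB k ((m : Fin 4), 0) := by
  rw [BB_apply]
  simp [Fin.val_natCast]
  exact gpow_mod k m

lemma Bgx (m : ℕ) : gA k ^ m * xA k = BB k ((m : Fin 4), 1) := by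
  rw [BB_apply]
  simp [Fin.val_natCast]
  rw [← gpow_mod]

lemma SAA_apply (p : Fin 4 × Fin 2) : SAA k (BB k p) =
    (-1 : AAlg k) ^ ((p.2 : ℕ) * ((p.1 : ℕ) + 1)) *
      (gA k ^ (3 * (p.1 : ℕ) + 3 * (p.2 : ℕ)) * xA k ^ (p.2 : ℕ)) :=
  Module.Basis.constr_basis _ _ _ _

lemma Sgpow (m : ℕ) : SAA k (gA k ^ m) = gA k ^ (3 * m) := by
  rw [Bg, SAA_apply]
  simp only [Fin.val_zero, Nat.mul_zero, Nat.zero_mul, pow_zero, one_mul, mul_one,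
    Nat.add_zero, Fin.val_natCast]
  rw [gpow_mod k (3 * (m % 4)), gpow_mod k (3 * m),
    show 3 * (m % 4) % 4 = 3 * m % 4 from by omega]

lemma Sgpowx (m : ℕ) : SAA k (gA k ^ m * xA k)
    = (-1 : AAlg k) ^ (m + 1) * (gA k ^ (3 * m + 3) * xA k) := by
  rw [Bgx, SAA_apply]
  simp only [Fin.val_one, Nat.one_mul, Nat.mul_one, pow_one, Fin.val_natCast]
  rw [neg_one_pow_mod k (m % 4 + 1), neg_one_pow_mod k (m + 1),
    gpow_mod k (3 * (m % 4) + 3), gpow_mod k (3 * m + 3),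
    show (m % 4 + 1) % 2 = (m + 1) % 2 from by omega,
    show (3 * (m % 4) + 3) % 4 = (3 * m + 3) % 4 from by omega]


-- the five Hopf axiom lemmas
lemma coassocA : ∀ h : AAlg k,
    (TensorProduct.assoc k (AAlg k) (AAlg k) (AAlg k))
      ((DeltaA k).toLinearMap.rTensor (AAlg k) (DeltaA k h)) =
    (DeltaA k).toLinearMap.lTensor (AAlg k) (DeltaA k h) := by
  have hmap : (TensorProduct.assoc k (AAlg k) (AAlg k) (AAlg k)).toLinearMap ∘ₗ
      ((DeltaA k).toLinearMap.rTensor (AAlg k)) ∘ₗ (DeltaA k).toLinearMap =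
      ((DeltaA k).toLinearMap.lTensor (AAlg k)) ∘ₗ (DeltaA k).toLinearMap := by
    apply (BB k).ext
    rintro ⟨i, n⟩
    rw [BB_apply]
    fin_cases n
    · simp only [Fin.isValue, Fin.val_zero, pow_zero, mul_one, LinearMap.coe_comp,
        LinearEquiv.coe_coe, Function.comp_apply, AlgHom.toLinearMap_apply]
      rw [Deltagpow, LinearMap.rTensor_tmul, LinearMap.lTensor_tmul]
      simp only [AlgHom.toLinearMap_apply]
      rw [Deltagpow, TensorProduct.assoc_tmul]
    · simp only [Fin.isValue, Fin.val_one, pow_one, LinearMap.coe_comp,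
        LinearEquiv.coe_coe, Function.comp_apply, AlgHom.toLinearMap_apply,
        Deltagpowx, Deltagpow, map_add, LinearMap.rTensor_tmul, LinearMap.lTensor_tmul,
        AlgHom.toLinearMap_apply, TensorProduct.add_tmul, TensorProduct.tmul_add,
        TensorProduct.assoc_tmul, add_assoc]
  intro h
  simpa using LinearMap.congr_fun hmap h

lemma counitlA : ∀ h : AAlg k,
    (TensorProduct.lid k (AAlg k)) ((epsA k).toLinearMap.rTensor (AAlg k) (DeltaA k h)) = h := by
  have hmap : (TensorProduct.lid k (AAlg k)).toLinearMap ∘ₗ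
      ((epsA k).toLinearMap.rTensor (AAlg k)) ∘ₗ (DeltaA k).toLinearMap = LinearMap.id := by
    apply (BB k).ext
    rintro ⟨i, n⟩
    rw [BB_apply]
    fin_cases n
    · simp only [Fin.isValue, Fin.val_zero, pow_zero, mul_one, LinearMap.coe_comp,
        LinearEquiv.coe_coe, Function.comp_apply, AlgHom.toLinearMap_apply,
        LinearMap.id_apply]
      rw [Deltagpow, LinearMap.rTensor_tmul]
      simp only [AlgHom.toLinearMap_apply, epsgpow, TensorProduct.lid_tmul, one_smul]
    · simp only [Fin.isValue, Fin.val_one, pow_one, LinearMap.coe_comp,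
        LinearEquiv.coe_coe, Function.comp_apply, AlgHom.toLinearMap_apply,
        LinearMap.id_apply]
      rw [Deltagpowx, map_add, LinearMap.rTensor_tmul, LinearMap.rTensor_tmul]
      simp only [AlgHom.toLinearMap_apply, epsgpow, epsgpowx, map_add,
        TensorProduct.lid_tmul, one_smul, zero_smul, zero_add]
  intro h
  simpa using LinearMap.congr_fun hmap h

lemma counitrA : ∀ h : AAlg k,
    (TensorProduct.rid k (AAlg k)) ((epsA k).toLinearMap.lTensor (AAlg k) (DeltaA k h)) = h := by
  have hmap : (TensorProduct.rid k (AAlg k)).toLinearMap ∘ₗ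
      ((epsA k).toLinearMap.lTensor (AAlg k)) ∘ₗ (DeltaA k).toLinearMap = LinearMap.id := by
    apply (BB k).ext
    rintro ⟨i, n⟩
    rw [BB_apply]
    fin_cases n
    · simp only [Fin.isValue, Fin.val_zero, pow_zero, mul_one, LinearMap.coe_comp,
        LinearEquiv.coe_coe, Function.comp_apply, AlgHom.toLinearMap_apply,
        LinearMap.id_apply]
      rw [Deltagpow, LinearMap.lTensor_tmul]
      simp only [AlgHom.toLinearMap_apply, epsgpow, TensorProduct.rid_tmul, one_smul]
    · simp only [Fin.isValue, Fin.val_one, pow_one, LinearMap.coe_comp,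
        LinearEquiv.coe_coe, Function.comp_apply, AlgHom.toLinearMap_apply,
        LinearMap.id_apply]
      rw [Deltagpowx, map_add, LinearMap.lTensor_tmul, LinearMap.lTensor_tmul]
      simp only [AlgHom.toLinearMap_apply, epsgpow, epsgpowx, map_add,
        TensorProduct.rid_tmul, one_smul, zero_smul, add_zero]
  intro h
  simpa using LinearMap.congr_fun hmap h

lemma antipode_t1 (m : ℕ) : SAA k (gA k ^ m * xA k) * gA k ^ m = -(gA k ^ 3 * xA k) := by
  rw [Sgpowx, mul_assoc, mul_assoc (gA k ^ (3 * m + 3)), x_gpow, mul_neg_one_pow,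
    ← mul_assoc ((-1 : AAlg k) ^ (m + 1)), ← pow_add, ← mul_assoc (gA k ^ (3 * m + 3)),
    ← pow_add, gpow_mod k (3 * m + 3 + m), show (3 * m + 3 + m) % 4 = 3 from by omega,
    neg_one_pow_mod, show (m + 1 + m) % 2 = 1 from by omega, pow_one, Aneg_one_mul]

lemma antipode_t2 (m : ℕ) : SAA k (gA k ^ (m + 1)) * (gA k ^ m * xA k) = gA k ^ 3 * xA k := by
  rw [Sgpow, ← mul_assoc, ← pow_add, gpow_mod, show (3 * (m + 1) + m) % 4 = 3 from by omega]

lemma antipode_u1 (m : ℕ) :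
    (gA k ^ m * xA k) * SAA k (gA k ^ m) = (-1 : AAlg k) ^ (m % 2) * xA k := by
  rw [Sgpow, mul_assoc, x_gpow, mul_neg_one_pow, ← mul_assoc (gA k ^ m), ← pow_add,
    gpow_mod k (m + 3 * m), show (m + 3 * m) % 4 = 0 from by omega, pow_zero, one_mul,
    neg_one_pow_mod, show 3 * m % 2 = m % 2 from by omega]

lemma antipode_u2 (m : ℕ) :
    gA k ^ (m + 1) * SAA k (gA k ^ m * xA k) = (-1 : AAlg k) ^ ((m + 1) % 2) * xA k := by
  rw [Sgpowx, mul_neg_one_pow, ← mul_assoc (gA k ^ (m + 1)), ← pow_add,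
    gpow_mod k (m + 1 + (3 * m + 3)), show (m + 1 + (3 * m + 3)) % 4 = 0 from by omega,
    pow_zero, one_mul, neg_one_pow_mod]

lemma antipodelA : ∀ h : AAlg k,
    (LinearMap.mul' k (AAlg k)) ((SAA k).rTensor (AAlg k) (DeltaA k h)) =
    algebraMap k (AAlg k) (epsA k h) := by
  have hmap : (LinearMap.mul' k (AAlg k)) ∘ₗ ((SAA k).rTensor (AAlg k)) ∘ₗ
      (DeltaA k).toLinearMap = (Algebra.linearMap k (AAlg k)) ∘ₗ (epsA k).toLinearMap := by
    apply (BB k).ext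
    rintro ⟨i, n⟩
    rw [BB_apply]
    fin_cases n
    · simp only [Fin.isValue, Fin.val_zero, pow_zero, mul_one, LinearMap.coe_comp,
        Function.comp_apply, AlgHom.toLinearMap_apply, Algebra.linearMap_apply,
        epsgpow, map_one]
      rw [Deltagpow, LinearMap.rTensor_tmul, LinearMap.mul'_apply, Sgpow, ← pow_add,
        gpow_mod, show (3 * (i : ℕ) + (i : ℕ)) % 4 = 0 from by omega, pow_zero]
    · simp only [Fin.isValue, Fin.val_one, pow_one, LinearMap.coe_comp,
        Function.comp_apply, AlgHom.toLinearMap_apply, Algebra.linearMap_apply,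
        epsgpowx, map_zero]
      rw [Deltagpowx, map_add, LinearMap.rTensor_tmul, LinearMap.rTensor_tmul, map_add,
        LinearMap.mul'_apply, LinearMap.mul'_apply, antipode_t1, antipode_t2,
        neg_add_cancel]
  intro h
  simpa using LinearMap.congr_fun hmap h

lemma antipoderA : ∀ h : AAlg k,
    (LinearMap.mul' k (AAlg k)) ((SAA k).lTensor (AAlg k) (DeltaA k h)) =
    algebraMap k (AAlg k) (epsA k h) := by
  have hmap : (LinearMap.mul' k (AAlg k)) ∘ₗ ((SAA k).lTensor (AAlg k)) ∘ₗ
      (DeltaA k).toLinearMap = (Algebra.linearMap k (AAlg k)) ∘ₗ (epsA k).toLinearMap := by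
    apply (BB k).ext
    rintro ⟨i, n⟩
    rw [BB_apply]
    fin_cases n
    · simp only [Fin.isValue, Fin.val_zero, pow_zero, mul_one, LinearMap.coe_comp,
        Function.comp_apply, AlgHom.toLinearMap_apply, Algebra.linearMap_apply,
        epsgpow, map_one]
      rw [Deltagpow, LinearMap.lTensor_tmul, LinearMap.mul'_apply, Sgpow, ← pow_add,
        gpow_mod, show ((i : ℕ) + 3 * (i : ℕ)) % 4 = 0 from by omega, pow_zero]
    · simp only [Fin.isValue, Fin.val_one, pow_one, LinearMap.coe_comp,
        Function.comp_apply, AlgHom.toLinearMap_apply, Algebra.linearMap_apply,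
        epsgpowx, map_zero]
      rw [Deltagpowx, map_add, LinearMap.lTensor_tmul, LinearMap.lTensor_tmul, map_add,
        LinearMap.mul'_apply, LinearMap.mul'_apply, antipode_u1, antipode_u2]
      rcases Nat.even_or_odd (i : ℕ) with he | ho
      · have h0 : (i : ℕ) % 2 = 0 := Nat.even_iff.mp he
        rw [h0, show ((i : ℕ) + 1) % 2 = 1 from by omega, pow_zero, pow_one,
          one_mul, Aneg_one_mul, add_neg_cancel]
      · have h1 : (i : ℕ) % 2 = 1 := Nat.odd_iff.mp ho
        rw [h1, show ((i : ℕ) + 1) % 2 = 0 from by omega, pow_one, pow_zero,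
          one_mul, Aneg_one_mul, neg_add_cancel]
  intro h
  simpa using LinearMap.congr_fun hmap h

end AuxRadford

/-- The Radford algebra `A` is 8-dimensional with basis `{gⁱ, gⁱx : 0 ≤ i ≤ 3}`,
and it carries a Hopf algebra structure extending its algebra structure with
`Δ(g) = g⊗g`, `Δ(x) = x⊗1 + g⊗x`, `ε(g) = 1`, `ε(x) = 0`. -/
theorem stmt_6 (k : Type) [Field k] [IsAlgClosed k] [CharZero k] :
    Module.finrank k (AAlg k) = 8 ∧
    (∃ B : Module.Basis (Fin 4 × Fin 2) k (AAlg k),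
      ∀ (i : Fin 4) (n : Fin 2), B (i, n) = gA k ^ (i : ℕ) * xA k ^ (n : ℕ)) ∧
    ∃ (Δ : AAlg k →ₐ[k] AAlg k ⊗[k] AAlg k) (ε : AAlg k →ₐ[k] k)
      (S : AAlg k →ₗ[k] AAlg k),
      IsHopfAlgebraStructure k (AAlg k) Δ ε S ∧
      Δ (gA k) = gA k ⊗ₜ gA k ∧
      Δ (xA k) = xA k ⊗ₜ 1 + gA k ⊗ₜ xA k ∧
      ε (gA k) = 1 ∧ ε (xA k) = 0 := by
  exact ⟨finrank_A k, ⟨BB k, fun i n => BB_apply k (i, n)⟩,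
    DeltaA k, epsA k, SAA k,
    ⟨coassocA k, counitlA k, counitrA k, antipodelA k, antipoderA k⟩,
    Deltag k, Deltax k, epsg k, epsx k⟩

end
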